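/- Let φ = v ⊗ z̄₁^{k₁}z̄₂^{k₂}⋯z̄_p^{k_p} ⊗ s be an eigenvector of D_R² of eigenvalue λ² (energy λ²) in L²(ℝ^∞) ⊗ L²(ℝ^∞)*_fin ⊗ S_{ΩT₀,fin}. Then ‖dρ*(zₙ)φ‖ ≤ (|λ|/√(2n))‖φ‖ and ‖dρ*(z̄ₙ)φ‖ ≤ (|λ|/√(2n) + 1)‖φ‖ for every n > 0. -/

import Mathlib

open scoped BigOperators ComplexConjugate

/-- Basis of `L²(ΩT₀,τ)_fin ⊗ S_{ΩT₀,fin} = L²(ℝ^∞)_fin ⊗ L²(ℝ^∞)*_fin ⊗ S_{ΩT₀,fin}`: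
a bosonic monomial, a dual bosonic monomial, and a fermionic wedge monomial. -/
abbrev TripleBasis : Type := (ℕ →₀ ℕ) × (ℕ →₀ ℕ) × Finset ℕ

/-- The space `L²(ΩT₀,τ)_fin ⊗ S_{ΩT₀,fin}`. -/
abbrev HSp : Type := TripleBasis →₀ ℂ

/-- `id ⊗ dρ*(zₙ) ⊗ id` (lowering on the dual Fock factor, with
`‖dρ*(zₙ)(z̄^k)‖² = kₙ‖z̄^k‖²` and `[dρ*(zₙ),dρ*(z̄ₙ)] = −id`). -/
noncomputable def dstarZ (n : ℕ) : HSp →ₗ[ℂ] HSp :=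
  Finsupp.lsum ℂ fun b =>
    LinearMap.toSpanSingleton ℂ HSp
      (((b.2.1 n : ℂ)) • Finsupp.single (b.1, b.2.1 - Finsupp.single n 1, b.2.2) 1)

/-- `id ⊗ dρ*(z̄ₙ) ⊗ id` (raising on the dual Fock factor). -/
noncomputable def dstarZbar (n : ℕ) : HSp →ₗ[ℂ] HSp :=
  Finsupp.lsum ℂ fun b =>
    LinearMap.toSpanSingleton ℂ HSp
      ((-1 : ℂ) • Finsupp.single (b.1, b.2.1 + Finsupp.single n 1, b.2.2) 1)

/-- The Koszul sign of inserting/removing `z̄ₙ` in the wedge monomial `s`. -/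
def ksgn (n : ℕ) (s : Finset ℕ) : ℂ := (-1 : ℂ) ^ (s.filter (· < n)).card

/-- `id ⊗ id ⊗ γ(zₙ)`, with `γ(zₙ) = −√2 (z̄ₙ ⌟ −)`. -/
noncomputable def GammaZ (n : ℕ) : HSp →ₗ[ℂ] HSp :=
  Finsupp.lsum ℂ fun b =>
    LinearMap.toSpanSingleton ℂ HSp
      (if n ∈ b.2.2 then
        ((-(Real.sqrt 2 : ℂ)) * ksgn n b.2.2) •
          Finsupp.single (b.1, b.2.1, b.2.2.erase n) 1
      else 0)

/-- `id ⊗ id ⊗ γ(z̄ₙ)`, with `γ(z̄ₙ) = √2 (z̄ₙ ∧ −)`. -/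
noncomputable def GammaZbar (n : ℕ) : HSp →ₗ[ℂ] HSp :=
  Finsupp.lsum ℂ fun b =>
    LinearMap.toSpanSingleton ℂ HSp
      (if n ∈ b.2.2 then 0
      else ((Real.sqrt 2 : ℂ) * ksgn n b.2.2) •
        Finsupp.single (b.1, b.2.1, insert n b.2.2) 1)

/-- The Dirac operator
`D_R = ∑_{n>0} √n (id ⊗ dρ*(z̄ₙ) ⊗ γ(zₙ) + id ⊗ dρ*(zₙ) ⊗ γ(z̄ₙ))`; the sum is
locally finite (on a basis vector only `n ∈ s` or `n ∈ supp q` contribute). -/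
noncomputable def DiracR : HSp →ₗ[ℂ] HSp :=
  Finsupp.lsum ℂ fun b =>
    LinearMap.toSpanSingleton ℂ HSp
      (∑ n ∈ b.2.1.support ∪ b.2.2, (Real.sqrt n : ℂ) •
        (dstarZbar n (GammaZ n (Finsupp.single b 1)) +
          dstarZ n (GammaZbar n (Finsupp.single b 1))))

/-- `id ⊗ id ⊗ N`, the fermionic number operator (eigenvalue `∑_{j∈s} j`). -/
noncomputable def NopH : HSp →ₗ[ℂ] HSp :=
  Finsupp.lsum ℂ fun b =>
    LinearMap.toSpanSingleton ℂ HSp (((∑ j ∈ b.2.2, j : ℕ) : ℂ) • Finsupp.single b 1)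

/-- `id ⊗ (dρ*(d)/i) ⊗ id`, the bosonic energy operator (eigenvalue `∑ⱼ j kⱼ`). -/
noncomputable def EopH : HSp →ₗ[ℂ] HSp :=
  Finsupp.lsum ℂ fun b =>
    LinearMap.toSpanSingleton ℂ HSp
      (((∑ j ∈ b.2.1.support, j * b.2.1 j : ℕ) : ℂ) • Finsupp.single b 1)

/-- The weight of a basis vector (its squared norm): `∏ kⱼ! · ∏ lⱼ! · 1`. -/
def wt (b : TripleBasis) : ℕ :=
  (∏ j ∈ b.1.support, (b.1 j).factorial) * (∏ j ∈ b.2.1.support, (b.2.1 j).factorial)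

/-- The inner product on `L²(ΩT₀,τ)_fin ⊗ S_{ΩT₀,fin}`. -/
noncomputable def innH (φ ψ : HSp) : ℂ :=
  ∑ b ∈ φ.support ∪ ψ.support, (wt b : ℂ) * conj (φ b) * ψ b

/-- The norm on `L²(ΩT₀,τ)_fin ⊗ S_{ΩT₀,fin}`. -/
noncomputable def normH (φ : HSp) : ℝ := Real.sqrt (innH φ φ).re

section Aux
open Finsupp

lemma lsum_single (v : TripleBasis → HSp) (b : TripleBasis) :
    (Finsupp.lsum ℂ fun b => LinearMap.toSpanSingleton ℂ HSp (v b)) (Finsupp.single b 1) = v b := by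
  rw [Finsupp.lsum_single]
  simp [LinearMap.toSpanSingleton_apply]

lemma lsum_eval (v : TripleBasis → HSp) (ψ : HSp) (c : TripleBasis) :
    (Finsupp.lsum ℂ fun b => LinearMap.toSpanSingleton ℂ HSp (v b)) ψ c
      = ∑ b ∈ ψ.support, ψ b * v b c := by
  classical
  rw [Finsupp.lsum_apply, Finsupp.sum_apply, Finsupp.sum]
  simp [LinearMap.toSpanSingleton_apply, Finsupp.smul_apply, smul_eq_mul]

lemma dstarZ_single (n : ℕ) (b : TripleBasis) :
    dstarZ n (Finsupp.single b 1)
      = (b.2.1 n : ℂ) • Finsupp.single (b.1, b.2.1 - Finsupp.single n 1, b.2.2) 1 :=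
  lsum_single _ b

lemma dstarZbar_single (n : ℕ) (b : TripleBasis) :
    dstarZbar n (Finsupp.single b 1)
      = (-1 : ℂ) • Finsupp.single (b.1, b.2.1 + Finsupp.single n 1, b.2.2) 1 :=
  lsum_single _ b

lemma GammaZ_single (n : ℕ) (b : TripleBasis) :
    GammaZ n (Finsupp.single b 1)
      = if n ∈ b.2.2 then
          ((-(Real.sqrt 2 : ℂ)) * ksgn n b.2.2) •
            Finsupp.single (b.1, b.2.1, b.2.2.erase n) 1
        else 0 :=
  lsum_single _ b

lemma GammaZbar_single (n : ℕ) (b : TripleBasis) :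
    GammaZbar n (Finsupp.single b 1)
      = if n ∈ b.2.2 then 0
        else ((Real.sqrt 2 : ℂ) * ksgn n b.2.2) •
          Finsupp.single (b.1, b.2.1, insert n b.2.2) 1 :=
  lsum_single _ b

lemma A_eq (n : ℕ) (b : TripleBasis) :
    dstarZbar n (GammaZ n (Finsupp.single b 1))
      = if n ∈ b.2.2 then
          ((Real.sqrt 2 : ℂ) * ksgn n b.2.2) •
            Finsupp.single (b.1, b.2.1 + Finsupp.single n 1, b.2.2.erase n) 1
        else 0 := by
  rw [GammaZ_single]
  split
  · rw [map_smul, dstarZbar_single, smul_smul]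
    congr 1
    ring
  · simp

lemma B_eq (n : ℕ) (b : TripleBasis) :
    dstarZ n (GammaZbar n (Finsupp.single b 1))
      = if n ∈ b.2.2 then 0
        else ((Real.sqrt 2 : ℂ) * ksgn n b.2.2 * (b.2.1 n : ℂ)) •
          Finsupp.single (b.1, b.2.1 - Finsupp.single n 1, insert n b.2.2) 1 := by
  rw [GammaZbar_single]
  split
  · simp
  · rw [map_smul, dstarZ_single, smul_smul]

lemma DiracR_single (b : TripleBasis) :
    DiracR (Finsupp.single b 1)
      = ∑ n ∈ b.2.1.support ∪ b.2.2, (Real.sqrt n : ℂ) •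
          (dstarZbar n (GammaZ n (Finsupp.single b 1)) +
            dstarZ n (GammaZbar n (Finsupp.single b 1))) :=
  lsum_single _ b

lemma ksgn_erase (n : ℕ) (s : Finset ℕ) : ksgn n (s.erase n) = ksgn n s := by
  unfold ksgn
  congr 2
  ext a
  simp only [Finset.mem_filter, Finset.mem_erase]
  constructor
  · rintro ⟨⟨_, h⟩, h2⟩; exact ⟨h, h2⟩
  · rintro ⟨h, h2⟩; exact ⟨⟨by omega, h⟩, h2⟩

lemma ksgn_insert (n : ℕ) (s : Finset ℕ) : ksgn n (insert n s) = ksgn n s := by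
  unfold ksgn
  congr 2
  ext a
  simp only [Finset.mem_filter, Finset.mem_insert]
  constructor
  · rintro ⟨h | h, h2⟩
    · exact (lt_irrefl n (h ▸ h2)).elim
    · exact ⟨h, h2⟩
  · rintro ⟨h, h2⟩; exact ⟨Or.inr h, h2⟩

lemma ksgn_sq (n : ℕ) (s : Finset ℕ) : ksgn n s * ksgn n s = 1 := by
  unfold ksgn
  rw [← mul_pow]
  norm_num

lemma sqrt_mul_self' (n : ℕ) : ((Real.sqrt n : ℂ)) * (Real.sqrt n : ℂ) = (n : ℂ) := by
  rw [← Complex.ofReal_mul, Real.mul_self_sqrt (Nat.cast_nonneg n)]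
  norm_cast

end Aux

lemma smul_single_eval (a : ℂ) (x c : TripleBasis) :
    (a • Finsupp.single x (1:ℂ)) c = if x = c then a else 0 := by
  simp [Finsupp.single_apply]

lemma eval_back_A (n : ℕ) (p q : ℕ →₀ ℕ) (s : Finset ℕ) (hns : n ∈ s) :
    (DiracR (Finsupp.single (p, q + Finsupp.single n 1, s.erase n) 1)) (p, q, s)
      = (Real.sqrt n : ℂ) * ((Real.sqrt 2 : ℂ) * ksgn n s * ((q n : ℂ) + 1)) := by
  classical
  rw [DiracR_single, Finsupp.finset_sum_apply]
  rw [Finset.sum_eq_single_of_mem n ?hmem ?hrest]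
  case hmem =>
    apply Finset.mem_union_left
    rw [Finsupp.mem_support_iff]
    simp [Finsupp.add_apply, Finsupp.single_eq_same]
  case hrest =>
    intro m _ hmn
    rw [Finsupp.smul_apply, A_eq, B_eq]
    simp only
    split
    · next hm =>
      have hne : ((p, q + Finsupp.single n 1 + Finsupp.single m 1,
          (s.erase n).erase m) : TripleBasis) ≠ (p, q, s) := by
        intro h
        have h2 := congrArg (fun r : TripleBasis => r.2.1 n) h
        simp only [Finsupp.add_apply, Finsupp.single_eq_same, Finsupp.single_apply] at h2
        split at h2 <;> omega
      rw [add_zero, smul_single_eval, if_neg hne]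
      simp
    · next hm =>
      have hne : ((p, q + Finsupp.single n 1 - Finsupp.single m 1,
          insert m (s.erase n)) : TripleBasis) ≠ (p, q, s) := by
        intro h
        have h3 := congrArg (fun r : TripleBasis => r.2.2) h
        simp only at h3
        have : n ∈ insert m (s.erase n) := h3.symm ▸ hns
        simp only [Finset.mem_insert, Finset.mem_erase] at this
        rcases this with h4 | h4
        · exact hmn h4.symm
        · exact h4.1 rfl
      rw [zero_add, smul_single_eval, if_neg hne]
      simp
  · -- the m = n term
    rw [Finsupp.smul_apply, A_eq, B_eq]
    simp only
    rw [if_neg (Finset.notMem_erase n s), if_neg (Finset.notMem_erase n s), zero_add,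
      smul_single_eval, if_pos]
    · rw [ksgn_erase, Finsupp.add_apply, Finsupp.single_eq_same, smul_eq_mul]
      push_cast
      ring
    · ext x
      · simp
      · simp [add_tsub_cancel_right]
      · simp [Finset.insert_erase hns]

lemma eval_back_B (n : ℕ) (p q : ℕ →₀ ℕ) (s : Finset ℕ) (hns : n ∉ s) (hq : q n ≠ 0) :
    (DiracR (Finsupp.single (p, q - Finsupp.single n 1, insert n s) 1)) (p, q, s)
      = (Real.sqrt n : ℂ) * ((Real.sqrt 2 : ℂ) * ksgn n s) := by
  classical
  rw [DiracR_single, Finsupp.finset_sum_apply]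
  rw [Finset.sum_eq_single_of_mem n ?hmem ?hrest]
  case hmem =>
    exact Finset.mem_union_right _ (Finset.mem_insert_self n s)
  case hrest =>
    intro m _ hmn
    rw [Finsupp.smul_apply, A_eq, B_eq]
    simp only
    split
    · next hm =>
      have hne : ((p, q - Finsupp.single n 1 + Finsupp.single m 1,
          (insert n s).erase m) : TripleBasis) ≠ (p, q, s) := by
        intro h
        have h3 := congrArg (fun r : TripleBasis => r.2.2) h
        simp only at h3
        have : n ∈ (insert n s).erase m :=
          Finset.mem_erase.mpr ⟨fun hh => hmn hh.symm, Finset.mem_insert_self n s⟩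
        rw [h3] at this
        exact hns this
      rw [add_zero, smul_single_eval, if_neg hne]
      simp
    · next hm =>
      have hne : ((p, q - Finsupp.single n 1 - Finsupp.single m 1,
          insert m (insert n s)) : TripleBasis) ≠ (p, q, s) := by
        intro h
        have h3 := congrArg (fun r : TripleBasis => r.2.2) h
        simp only at h3
        have : n ∈ insert m (insert n s) :=
          Finset.mem_insert_of_mem (Finset.mem_insert_self n s)
        rw [h3] at this
        exact hns this
      rw [zero_add, smul_single_eval, if_neg hne]
      simp
  · -- the m = n term
    rw [Finsupp.smul_apply, A_eq, B_eq]
    simp only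
    rw [if_pos (Finset.mem_insert_self n s), if_pos (Finset.mem_insert_self n s), add_zero,
      smul_single_eval, if_pos]
    · rw [ksgn_insert, smul_eq_mul]
    · ext x
      · simp
      · simp only
        rw [tsub_add_cancel_of_le]
        rw [Finsupp.single_le_iff]
        omega
      · simp [Finset.erase_insert hns]

lemma sqrt2_mul_self : ((Real.sqrt 2 : ℝ) : ℂ) * ((Real.sqrt 2 : ℝ) : ℂ) = 2 := by
  rw [← Complex.ofReal_mul, Real.mul_self_sqrt (by norm_num)]
  norm_num

lemma diag_eval (b : TripleBasis) :
    DiracR (DiracR (Finsupp.single b 1)) b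
      = ((2 * ((∑ j ∈ b.2.2, j) + ∑ j ∈ b.2.1.support, j * b.2.1 j) : ℕ) : ℂ) := by
  classical
  obtain ⟨p, q, s⟩ := b
  rw [DiracR_single, map_sum, Finsupp.finset_sum_apply]
  have step : ∀ m ∈ q.support ∪ s,
      (DiracR ((Real.sqrt m : ℂ) • (dstarZbar m (GammaZ m (Finsupp.single ((p,q,s) : TripleBasis) 1)) +
        dstarZ m (GammaZbar m (Finsupp.single ((p,q,s) : TripleBasis) 1))))) (p, q, s)
      = (2 * m * q m : ℂ) + if m ∈ s then (2 * m : ℂ) else 0 := by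
    intro m hm
    rw [map_smul, Finsupp.smul_apply, map_add, Finsupp.add_apply, A_eq, B_eq]
    simp only
    by_cases hms : m ∈ s
    · rw [if_pos hms, if_pos hms, map_zero, map_smul, Finsupp.smul_apply,
        eval_back_A m p q s hms, if_pos hms]
      rw [Finsupp.coe_zero, Pi.zero_apply, add_zero, smul_eq_mul, smul_eq_mul]
      calc (Real.sqrt m : ℂ) * ((Real.sqrt 2 : ℂ) * ksgn m s *
              ((Real.sqrt m : ℂ) * ((Real.sqrt 2 : ℂ) * ksgn m s * ((q m : ℂ) + 1))))
          = ((Real.sqrt m : ℂ) * (Real.sqrt m : ℂ)) *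
              (((Real.sqrt 2 : ℝ) : ℂ) * ((Real.sqrt 2 : ℝ) : ℂ)) *
              (ksgn m s * ksgn m s) * ((q m : ℂ) + 1) := by ring
        _ = (m : ℂ) * 2 * 1 * ((q m : ℂ) + 1) := by
            rw [sqrt_mul_self', sqrt2_mul_self, ksgn_sq]
        _ = (2 * m * q m : ℂ) + (2 * m : ℂ) := by ring
    · rw [if_neg hms, if_neg hms, if_neg hms, map_zero]
      by_cases hqm : q m = 0
      · rw [hqm]
        simp
      · rw [map_smul, Finsupp.smul_apply, eval_back_B m p q s hms hqm]
        rw [Finsupp.coe_zero, Pi.zero_apply, zero_add, smul_eq_mul, smul_eq_mul]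
        calc (Real.sqrt m : ℂ) * ((Real.sqrt 2 : ℂ) * ksgn m s * (q m : ℂ) *
                ((Real.sqrt m : ℂ) * ((Real.sqrt 2 : ℂ) * ksgn m s)))
            = ((Real.sqrt m : ℂ) * (Real.sqrt m : ℂ)) *
                (((Real.sqrt 2 : ℝ) : ℂ) * ((Real.sqrt 2 : ℝ) : ℂ)) *
                (ksgn m s * ksgn m s) * (q m : ℂ) := by ring
          _ = (m : ℂ) * 2 * 1 * (q m : ℂ) := by
              rw [sqrt_mul_self', sqrt2_mul_self, ksgn_sq]
          _ = (2 * m * q m : ℂ) + 0 := by ring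
  rw [Finset.sum_congr rfl step, Finset.sum_add_distrib]
  have h1 : ∑ m ∈ q.support ∪ s, (2 * m * q m : ℂ)
      = ∑ m ∈ q.support, (2 * m * q m : ℂ) := by
    refine (Finset.sum_subset Finset.subset_union_left ?_).symm
    intro x _ hx
    rw [Finsupp.notMem_support_iff] at hx
    rw [hx]
    simp
  have h2 : ∑ m ∈ q.support ∪ s, (if m ∈ s then (2 * m : ℂ) else 0)
      = ∑ m ∈ s, (2 * m : ℂ) := by
    rw [Finset.sum_ite_mem, Finset.union_inter_cancel_right]
  rw [h1, h2]
  push_cast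
  rw [mul_add, Finset.mul_sum, Finset.mul_sum, add_comm (∑ m ∈ q.support, (2:ℂ) * m * q m)]
  congr 1 <;> exact Finset.sum_congr rfl fun x _ => by ring

lemma DiracR_single_fst (b c : TripleBasis) (h : c.1 ≠ b.1) :
    DiracR (Finsupp.single b 1) c = 0 := by
  classical
  rw [DiracR_single, Finsupp.finset_sum_apply]
  apply Finset.sum_eq_zero
  intro m _
  rw [Finsupp.smul_apply, A_eq, B_eq, Finsupp.add_apply]
  split
  · rw [Finsupp.coe_zero, Pi.zero_apply, add_zero, smul_single_eval,
      if_neg (show ((b.1, b.2.1 + Finsupp.single m 1, b.2.2.erase m) : TripleBasis) ≠ c from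
        fun hh => h (congrArg Prod.fst hh).symm)]
    simp
  · rw [Finsupp.coe_zero, Pi.zero_apply, zero_add, smul_single_eval,
      if_neg (show ((b.1, b.2.1 - Finsupp.single m 1, insert m b.2.2) : TripleBasis) ≠ c from
        fun hh => h (congrArg Prod.fst hh).symm)]
    simp

lemma DiracR_fst (ψ : HSp) (p₀ : ℕ →₀ ℕ) (hψ : ∀ x : TripleBasis, ψ x ≠ 0 → x.1 = p₀)
    (c : TripleBasis) (hc : c.1 ≠ p₀) : DiracR ψ c = 0 := by
  classical
  have hd : DiracR ψ c = ∑ b ∈ ψ.support, ψ b * (DiracR (Finsupp.single b 1)) c := by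
    unfold DiracR
    rw [lsum_eval]
    refine Finset.sum_congr rfl fun b _ => ?_
    rw [lsum_single]
  rw [hd]
  apply Finset.sum_eq_zero
  intro b hb
  rw [DiracR_single_fst b c (by rw [hψ b (Finsupp.mem_support_iff.mp hb)]; exact hc), mul_zero]

lemma DiracR2_fst (b c : TripleBasis) (h : c.1 ≠ b.1) :
    DiracR (DiracR (Finsupp.single b 1)) c = 0 := by
  apply DiracR_fst _ b.1 _ c h
  intro x hx
  by_contra hxb
  exact hx (DiracR_single_fst b x hxb)

lemma eigen_value (q : ℕ →₀ ℕ) (s : Finset ℕ) (φ : HSp)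
    (hφ : ∀ b : TripleBasis, φ b ≠ 0 → b.2.1 = q ∧ b.2.2 = s) (lam : ℝ)
    (hlam : DiracR (DiracR φ) = ((lam ^ 2 : ℝ) : ℂ) • φ)
    (b : TripleBasis) (hb : φ b ≠ 0) :
    lam ^ 2 = ((2 * ((∑ j ∈ s, j) + ∑ j ∈ q.support, j * q j) : ℕ) : ℝ) := by
  classical
  obtain ⟨hq, hs⟩ := hφ b hb
  have hdecomp : DiracR (DiracR φ) b
      = ∑ x ∈ φ.support, φ x * (DiracR (DiracR (Finsupp.single x 1))) b := by
    conv_lhs => rw [← Finsupp.sum_single φ]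
    rw [Finsupp.sum, map_sum, map_sum, Finsupp.finset_sum_apply]
    refine Finset.sum_congr rfl fun x _ => ?_
    rw [show Finsupp.single x (φ x) = φ x • Finsupp.single x (1:ℂ) by
        rw [Finsupp.smul_single, smul_eq_mul, mul_one],
      map_smul, map_smul, Finsupp.smul_apply, smul_eq_mul]
  have hbmem : b ∈ φ.support := Finsupp.mem_support_iff.mpr hb
  have hsum : ∑ x ∈ φ.support, φ x * (DiracR (DiracR (Finsupp.single x 1))) b
      = φ b * (DiracR (DiracR (Finsupp.single b 1))) b := by
    refine Finset.sum_eq_single_of_mem b hbmem fun x hx hxb => ?_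
    have hx2 := hφ x (Finsupp.mem_support_iff.mp hx)
    have hfst : b.1 ≠ x.1 := by
      intro hh
      exact hxb (Prod.ext (hh.symm) (Prod.ext (hx2.1.trans hq.symm) (hx2.2.trans hs.symm)))
    rw [DiracR2_fst x b hfst, mul_zero]
  have heq := congrArg (fun ψ : HSp => ψ b) hlam
  simp only [Finsupp.smul_apply, smul_eq_mul] at heq
  rw [hdecomp, hsum, diag_eval] at heq
  rw [hq, hs] at heq
  rw [mul_comm (φ b)] at heq
  have : ((2 * ((∑ j ∈ s, j) + ∑ j ∈ q.support, j * q j) : ℕ) : ℂ) = ((lam ^ 2 : ℝ) : ℂ) :=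
    mul_right_cancel₀ hb heq
  exact_mod_cast this.symm

lemma innH_self_eq (φ : HSp) :
    innH φ φ = (((∑ b ∈ φ.support, (wt b : ℝ) * Complex.normSq (φ b)) : ℝ) : ℂ) := by
  unfold innH
  rw [Finset.union_self]
  push_cast
  refine Finset.sum_congr rfl fun b _ => ?_
  rw [mul_assoc, ← Complex.normSq_eq_conj_mul_self]

lemma innH_self_re_nonneg (φ : HSp) : 0 ≤ (innH φ φ).re := by
  rw [innH_self_eq, Complex.ofReal_re]
  apply Finset.sum_nonneg
  intro b _
  exact mul_nonneg (Nat.cast_nonneg _) (Complex.normSq_nonneg _)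

lemma normH_nonneg (φ : HSp) : 0 ≤ normH φ := Real.sqrt_nonneg _

lemma gen_inn (φ : HSp) (q : ℕ →₀ ℕ) (s : Finset ℕ)
    (hφ : ∀ b : TripleBasis, φ b ≠ 0 → b.2.1 = q ∧ b.2.2 = s)
    (v : TripleBasis → HSp) (c₀ : ℂ) (q' : ℕ →₀ ℕ) (s' : Finset ℕ)
    (hv : ∀ b : TripleBasis, b.2.1 = q → b.2.2 = s →
      v b = c₀ • Finsupp.single (b.1, q', s') 1)
    (r : ℝ)
    (hw : ∀ p : ℕ →₀ ℕ, Complex.normSq c₀ * (wt (p, q', s') : ℝ) = r * (wt (p, q, s) : ℝ)) :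
    innH ((Finsupp.lsum ℂ fun b => LinearMap.toSpanSingleton ℂ HSp (v b)) φ)
         ((Finsupp.lsum ℂ fun b => LinearMap.toSpanSingleton ℂ HSp (v b)) φ)
      = ((r : ℝ) : ℂ) * innH φ φ := by
  classical
  set ψ := (Finsupp.lsum ℂ fun b => LinearMap.toSpanSingleton ℂ HSp (v b)) φ with hψ
  have claim : ∀ c : TripleBasis,
      ψ c = if c.2 = (q', s') then c₀ * φ (c.1, q, s) else 0 := by
    intro c
    rw [hψ, lsum_eval]
    have hterm : ∀ b ∈ φ.support,
        φ b * v b c = φ b * c₀ * (if ((b.1, q', s') : TripleBasis) = c then 1 else 0) := by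
      intro b hb
      obtain ⟨h1, h2⟩ := hφ b (Finsupp.mem_support_iff.mp hb)
      rw [hv b h1 h2, smul_single_eval]
      split <;> ring
    rw [Finset.sum_congr rfl hterm]
    by_cases hc : c.2 = (q', s')
    · rw [if_pos hc]
      by_cases hmem : ((c.1, q, s) : TripleBasis) ∈ φ.support
      · rw [Finset.sum_eq_single_of_mem (c.1, q, s) hmem ?h1]
        · rw [if_pos, mul_one]
          · ring
          · exact Prod.ext rfl hc.symm
        case h1 =>
          intro x hx hxn
          obtain ⟨h1, h2⟩ := hφ x (Finsupp.mem_support_iff.mp hx)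
          rw [if_neg, mul_zero]
          intro hh
          have hx1 : x.1 = c.1 := by rw [← hh]
          exact hxn (Prod.ext hx1 (Prod.ext h1 h2))
      · rw [Finsupp.notMem_support_iff.mp hmem, mul_zero]
        apply Finset.sum_eq_zero
        intro x hx
        obtain ⟨h1, h2⟩ := hφ x (Finsupp.mem_support_iff.mp hx)
        rw [if_neg, mul_zero]
        intro hh
        apply hmem
        have hx1 : x.1 = c.1 := by rw [← hh]
        rw [Finsupp.mem_support_iff, ← hx1,
          show ((x.1, q, s) : TripleBasis) = x from Prod.ext rfl (Prod.ext h1.symm h2.symm)]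
        exact Finsupp.mem_support_iff.mp hx
    · rw [if_neg hc]
      apply Finset.sum_eq_zero
      intro x _
      rw [if_neg, mul_zero]
      intro hh
      apply hc
      rw [← hh]
  -- support of ψ is contained in the image of the shift map
  have hsub : ψ.support ⊆ φ.support.image (fun b : TripleBasis => ((b.1, q', s') : TripleBasis)) := by
    intro c hc
    have hcne := Finsupp.mem_support_iff.mp hc
    rw [claim c] at hcne
    by_cases h2 : c.2 = (q', s')
    · rw [if_pos h2] at hcne
      have hφc : φ (c.1, q, s) ≠ 0 := fun hh => hcne (by rw [hh, mul_zero])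
      refine Finset.mem_image.mpr ⟨(c.1, q, s), Finsupp.mem_support_iff.mpr hφc, ?_⟩
      exact Prod.ext rfl h2.symm
    · rw [if_neg h2] at hcne
      exact absurd rfl hcne
  rw [innH_self_eq ψ, innH_self_eq φ]
  rw [← Complex.ofReal_mul]
  norm_cast
  rw [Finset.sum_subset hsub (fun x _ hx => by
    rw [Finsupp.notMem_support_iff.mp hx]
    simp)]
  rw [Finset.sum_image ?hinj]
  case hinj =>
    intro x hx y hy hxy
    obtain ⟨hx1, hx2⟩ := hφ x (Finsupp.mem_support_iff.mp hx)
    obtain ⟨hy1, hy2⟩ := hφ y (Finsupp.mem_support_iff.mp hy)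
    simp only [Prod.mk.injEq] at hxy
    exact Prod.ext hxy.1 (Prod.ext (hx1.trans hy1.symm) (hx2.trans hy2.symm))
  rw [Finset.mul_sum]
  refine Finset.sum_congr rfl fun b hb => ?_
  obtain ⟨h1, h2⟩ := hφ b (Finsupp.mem_support_iff.mp hb)
  have hbb : ((b.1, q, s) : TripleBasis) = b := Prod.ext rfl (Prod.ext h1.symm h2.symm)
  rw [claim, if_pos rfl, hbb, Complex.normSq_mul]
  have h3 := hw b.1
  rw [hbb] at h3
  linear_combination (Complex.normSq (φ b)) * h3

lemma prod_fact_superset (q : ℕ →₀ ℕ) (T : Finset ℕ) (h : q.support ⊆ T) :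
    ∏ j ∈ T, (q j).factorial = ∏ j ∈ q.support, (q j).factorial := by
  refine (Finset.prod_subset h fun x _ hx => ?_).symm
  rw [Finsupp.notMem_support_iff.mp hx]
  rfl

lemma W_add (q : ℕ →₀ ℕ) (n : ℕ) :
    ∏ j ∈ (q + Finsupp.single n 1).support, ((q + Finsupp.single n 1 : ℕ →₀ ℕ) j).factorial
      = (q n + 1) * ∏ j ∈ q.support, (q j).factorial := by
  classical
  set T : Finset ℕ := q.support ∪ {n} with hT
  have hn : n ∈ T := Finset.mem_union_right _ (Finset.mem_singleton_self n)
  have hs1 : (q + Finsupp.single n 1).support ⊆ T :=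
    (Finsupp.support_add).trans
      (Finset.union_subset_union (le_refl _) Finsupp.support_single_subset)
  have hs2 : q.support ⊆ T := Finset.subset_union_left
  rw [← prod_fact_superset _ T hs1, ← prod_fact_superset q T hs2,
    ← Finset.mul_prod_erase T _ hn, ← Finset.mul_prod_erase T _ hn]
  have hj : ∀ j ∈ T.erase n,
      ((q + Finsupp.single n 1 : ℕ →₀ ℕ) j).factorial = (q j).factorial := by
    intro j hjmem
    rw [Finsupp.add_apply, Finsupp.single_apply,
      if_neg (fun hh => (Finset.mem_erase.mp hjmem).1 hh.symm), add_zero]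
  rw [Finset.prod_congr rfl hj, Finsupp.add_apply, Finsupp.single_eq_same,
    Nat.factorial_succ]
  ring

lemma W_sub (q : ℕ →₀ ℕ) (n : ℕ) (hq : q n ≠ 0) :
    (∏ j ∈ q.support, (q j).factorial)
      = q n * ∏ j ∈ (q - Finsupp.single n 1).support, ((q - Finsupp.single n 1 : ℕ →₀ ℕ) j).factorial := by
  have hle : Finsupp.single n 1 ≤ q := Finsupp.single_le_iff.mpr (by omega)
  have hqe : (q - Finsupp.single n 1) + Finsupp.single n 1 = q := tsub_add_cancel_of_le hle
  conv_lhs => rw [← hqe]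
  rw [W_add]
  congr 1
  rw [Finsupp.tsub_apply, Finsupp.single_eq_same]
  omega

lemma hw_Z (q : ℕ →₀ ℕ) (n : ℕ) (s : Finset ℕ) (p : ℕ →₀ ℕ) :
    Complex.normSq ((q n : ℕ) : ℂ) * (wt (p, q - Finsupp.single n 1, s) : ℝ)
      = ((q n : ℕ) : ℝ) * (wt (p, q, s) : ℝ) := by
  have hns : ((q n : ℕ) : ℂ) = (((q n : ℕ) : ℝ) : ℂ) := by push_cast; ring
  rw [hns, Complex.normSq_ofReal]
  by_cases hq : q n = 0
  · rw [hq]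
    have : q - Finsupp.single n 1 = q := by
      ext j
      rw [Finsupp.tsub_apply, Finsupp.single_apply]
      rcases eq_or_ne n j with h | h
      · rw [if_pos h, ← h, hq]
      · rw [if_neg h]
        omega
    rw [this]
    simp
  · have h := W_sub q n hq
    have h' : ((∏ j ∈ q.support, (q j).factorial : ℕ) : ℝ)
        = ((q n : ℕ) : ℝ) *
          ((∏ j ∈ (q - Finsupp.single n 1).support,
            ((q - Finsupp.single n 1 : ℕ →₀ ℕ) j).factorial : ℕ) : ℝ) := by
      exact_mod_cast h
    simp only [wt]
    rw [Nat.cast_mul, Nat.cast_mul, h']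
    ring

lemma hw_Zbar (q : ℕ →₀ ℕ) (n : ℕ) (s : Finset ℕ) (p : ℕ →₀ ℕ) :
    Complex.normSq (-1 : ℂ) * (wt (p, q + Finsupp.single n 1, s) : ℝ)
      = (((q n : ℕ) : ℝ) + 1) * (wt (p, q, s) : ℝ) := by
  have h := W_add q n
  have h' : ((∏ j ∈ (q + Finsupp.single n 1).support,
        ((q + Finsupp.single n 1 : ℕ →₀ ℕ) j).factorial : ℕ) : ℝ)
      = (((q n : ℕ) : ℝ) + 1) * ((∏ j ∈ q.support, (q j).factorial : ℕ) : ℝ) := by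
    exact_mod_cast h
  have hns : Complex.normSq (-1 : ℂ) = 1 := by simp
  simp only [wt]
  rw [hns, Nat.cast_mul, Nat.cast_mul, h', one_mul]
  ring

lemma inn_dstarZ (n : ℕ) (q : ℕ →₀ ℕ) (s : Finset ℕ) (φ : HSp)
    (hφ : ∀ b : TripleBasis, φ b ≠ 0 → b.2.1 = q ∧ b.2.2 = s) :
    innH (dstarZ n φ) (dstarZ n φ) = ((((q n : ℕ) : ℝ)) : ℂ) * innH φ φ := by
  unfold dstarZ
  exact gen_inn φ q s hφ _ ((q n : ℕ) : ℂ) (q - Finsupp.single n 1) s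
    (fun b h1 h2 => by rw [h1, h2]) ((q n : ℕ) : ℝ) (fun p => hw_Z q n s p)

lemma inn_dstarZbar (n : ℕ) (q : ℕ →₀ ℕ) (s : Finset ℕ) (φ : HSp)
    (hφ : ∀ b : TripleBasis, φ b ≠ 0 → b.2.1 = q ∧ b.2.2 = s) :
    innH (dstarZbar n φ) (dstarZbar n φ)
      = (((((q n : ℕ) : ℝ) + 1) : ℝ) : ℂ) * innH φ φ := by
  unfold dstarZbar
  exact gen_inn φ q s hφ _ (-1 : ℂ) (q + Finsupp.single n 1) s
    (fun b h1 h2 => by rw [h1, h2]) (((q n : ℕ) : ℝ) + 1) (fun p => hw_Zbar q n s p)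

lemma normH_eq (φ ψ : HSp) (r : ℝ) (hr : 0 ≤ r)
    (h : innH ψ ψ = ((r : ℝ) : ℂ) * innH φ φ) :
    normH ψ = Real.sqrt r * normH φ := by
  unfold normH
  rw [h, Complex.re_ofReal_mul, Real.sqrt_mul hr]


/-- if `φ = v ⊗ z̄₁^{k₁}⋯z̄_p^{k_p} ⊗ s` is an eigenvector of `D_R²`
of eigenvalue (energy) `λ²`, then `‖dρ*(zₙ)φ‖ ≤ (|λ|/√(2n))‖φ‖` and
`‖dρ*(z̄ₙ)φ‖ ≤ (|λ|/√(2n) + 1)‖φ‖` for every `n > 0`. -/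
theorem stmt15 (q : ℕ →₀ ℕ) (s : Finset ℕ) (φ : HSp)
    -- `φ` has fixed dual-Fock monomial `q` and fixed fermionic monomial `s`
    -- (i.e. `φ = v ⊗ z̄^q ⊗ s` for some bosonic vector `v`):
    (hφ : ∀ b : TripleBasis, φ b ≠ 0 → b.2.1 = q ∧ b.2.2 = s)
    (lam : ℝ)
    -- `φ` is an eigenvector of `D_R²` at energy `λ²`:
    (hlam : DiracR (DiracR φ) = ((lam ^ 2 : ℝ) : ℂ) • φ)
    (n : ℕ) (hn : 0 < n) :
    normH (dstarZ n φ) ≤ (|lam| / Real.sqrt (2 * n)) * normH φ ∧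
    normH (dstarZbar n φ) ≤ (|lam| / Real.sqrt (2 * n) + 1) * normH φ := by
  classical
  have hdivnonneg : 0 ≤ |lam| / Real.sqrt (2 * n) :=
    div_nonneg (abs_nonneg lam) (Real.sqrt_nonneg _)
  by_cases hzero : φ = 0
  · subst hzero
    rw [map_zero, map_zero]
    have h0 : normH 0 = 0 := by
      unfold normH innH
      simp
    rw [h0, mul_zero, mul_zero]
    exact ⟨le_refl 0, le_refl 0⟩
  · obtain ⟨b, hb⟩ := Finsupp.ne_iff.mp hzero
    rw [Finsupp.coe_zero, Pi.zero_apply] at hb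
    have heig := eigen_value q s φ hφ lam hlam b hb
    have h2n : (0:ℝ) < 2 * n := by
      have : (0:ℝ) < (n:ℝ) := by exact_mod_cast hn
      linarith
    have hbound : ((q n : ℕ) : ℝ) * (2 * n) ≤ lam ^ 2 := by
      rw [heig]
      have h1 : n * q n ≤ (∑ j ∈ s, j) + ∑ j ∈ q.support, j * q j := by
        by_cases hqn : q n = 0
        · simp [hqn]
        · calc n * q n ≤ ∑ j ∈ q.support, j * q j :=
              Finset.single_le_sum (f := fun j => j * q j) (fun i _ => Nat.zero_le _)
                (Finsupp.mem_support_iff.mpr hqn)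
            _ ≤ _ := Nat.le_add_left _ _
      have h2 : 2 * (n * q n) ≤ 2 * ((∑ j ∈ s, j) + ∑ j ∈ q.support, j * q j) := by omega
      calc ((q n : ℕ) : ℝ) * (2 * n) = ((2 * (n * q n) : ℕ) : ℝ) := by push_cast; ring
        _ ≤ _ := by exact_mod_cast h2
    have hsq : Real.sqrt ((q n : ℕ) : ℝ) ≤ |lam| / Real.sqrt (2 * n) := by
      have hle : ((q n : ℕ) : ℝ) ≤ (|lam| / Real.sqrt (2 * n)) ^ 2 := by
        rw [div_pow, sq_abs, Real.sq_sqrt h2n.le, le_div_iff₀ h2n]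
        linarith [hbound]
      calc Real.sqrt ((q n : ℕ) : ℝ) ≤ Real.sqrt ((|lam| / Real.sqrt (2 * n)) ^ 2) :=
            Real.sqrt_le_sqrt hle
        _ = |lam| / Real.sqrt (2 * n) := Real.sqrt_sq hdivnonneg
    have hA := normH_eq φ (dstarZ n φ) ((q n : ℕ) : ℝ) (Nat.cast_nonneg _)
      (inn_dstarZ n q s φ hφ)
    have hB := normH_eq φ (dstarZbar n φ) (((q n : ℕ) : ℝ) + 1)
      (by positivity) (inn_dstarZbar n q s φ hφ)
    have hsq1 : Real.sqrt (((q n : ℕ) : ℝ) + 1) ≤ Real.sqrt ((q n : ℕ) : ℝ) + 1 := by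
      have h1 : ((q n : ℕ) : ℝ) + 1 ≤ (Real.sqrt ((q n : ℕ) : ℝ) + 1) ^ 2 := by
        nlinarith [Real.sq_sqrt (show (0:ℝ) ≤ ((q n : ℕ) : ℝ) from Nat.cast_nonneg _),
          Real.sqrt_nonneg ((q n : ℕ) : ℝ)]
      calc Real.sqrt (((q n : ℕ) : ℝ) + 1)
          ≤ Real.sqrt ((Real.sqrt ((q n : ℕ) : ℝ) + 1) ^ 2) := Real.sqrt_le_sqrt h1
        _ = Real.sqrt ((q n : ℕ) : ℝ) + 1 := Real.sqrt_sq (by positivity)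
    constructor
    · rw [hA]
      exact mul_le_mul_of_nonneg_right hsq (normH_nonneg φ)
    · rw [hB]
      refine mul_le_mul_of_nonneg_right ?_ (normH_nonneg φ)
      calc Real.sqrt (((q n : ℕ) : ℝ) + 1) ≤ Real.sqrt ((q n : ℕ) : ℝ) + 1 := hsq1
        _ ≤ |lam| / Real.sqrt (2 * n) + 1 := by linarith [hsq]
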